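/- Let S_{n,k} be the number of signed permutations σ of the multiset {1,1,2,2,...,n,n} (each entry independently signed) with des_B(σ) = k, and T_{n,k} the analogous count for signed permutations of {1,1,...,n,n,n+1} in which the entry n+1 has positive sign. Then T_{n,k} = (k+1) S_{n,k} + (2n-k+1) S_{n,k-1}. -/

import Mathlib

open Polynomial

/-- Number of descents of a word. -/
def des (l : List ℤ) : ℕ := ((l.zip l.tail).filter (fun p => p.2 < p.1)).length

/-- Type-B descents: prepend 0. -/
def desB (l : List ℤ) : ℕ := des (0 :: l)

/-- The multiset {1,1,2,2,...,n,n} as a list. -/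
def baseList (n : ℕ) : List ℤ := (List.range n).flatMap (fun i => [(i : ℤ) + 1, (i : ℤ) + 1])

/-- All distinct arrangements (multiset permutations) of a list. -/
def arrangements (l : List ℤ) : List (List ℤ) := l.permutations.dedup

/-- Descent polynomial over arrangements of `l`. -/
noncomputable def desPoly (l : List ℤ) : Polynomial ℝ :=
  ((arrangements l).map (fun w => (X : Polynomial ℝ) ^ des w)).sum

noncomputable def Ppoly (n : ℕ) : Polynomial ℝ := desPoly (baseList n)

noncomputable def Qpoly (n : ℕ) : Polynomial ℝ := desPoly (baseList n ++ [(n : ℤ) + 1])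

/-- All signings of a word. -/
def signings : List ℤ → List (List ℤ)
  | [] => [[]]
  | a :: t => (signings t).flatMap (fun w => [a :: w, (-a) :: w])

/-- All signed permutations of the multiset given by `l`. -/
def signedWords (l : List ℤ) : List (List ℤ) := (arrangements l).flatMap signings

noncomputable def SpolyB (n : ℕ) : Polynomial ℝ :=
  ((signedWords (baseList n)).map (fun w => (X : Polynomial ℝ) ^ desB w)).sum

/-- Signed permutations of {1,1,...,n,n,n+1} in which n+1 carries a plus sign. -/
def Dwords (n : ℕ) : List (List ℤ) :=
  (signedWords (baseList n ++ [(n : ℤ) + 1])).filter (fun w => ((n : ℤ) + 1) ∈ w)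

noncomputable def TpolyB (n : ℕ) : Polynomial ℝ :=
  ((Dwords n).map (fun w => (X : Polynomial ℝ) ^ desB w)).sum

def PcountZ (n : ℕ) (k : ℤ) : ℕ :=
  ((arrangements (baseList n)).filter (fun w => (des w : ℤ) = k)).length

def QcountN (n : ℕ) (k : ℕ) : ℕ :=
  ((arrangements (baseList n ++ [(n : ℤ) + 1])).filter (fun w => des w = k)).length

def ScountZ (n : ℕ) (k : ℤ) : ℕ :=
  ((signedWords (baseList n)).filter (fun w => (desB w : ℤ) = k)).length

def TcountZ (n : ℕ) (k : ℤ) : ℕ :=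
  ((Dwords n).filter (fun w => (desB w : ℤ) = k)).length




lemma des_nil : des [] = 0 := rfl
lemma des_single (a : ℤ) : des [a] = 0 := rfl
lemma des_cons (a b : ℤ) (t : List ℤ) :
    des (a :: b :: t) = (if b < a then 1 else 0) + des (b :: t) := by
  simp only [des, List.zip_cons_cons, List.tail_cons, List.filter_cons]
  split_ifs <;> simp_all [Nat.add_comm, List.zip]

lemma key (c : ℤ) : ∀ (m : List ℤ), m ≠ [] → (∀ x ∈ m, x < c) → ∀ k : ℤ,
    (((List.range m.length).countP (fun i => decide ((des (m.insertIdx (i+1) c) : ℤ) = k))) : ℤ)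
      = (if (des m : ℤ) = k then (des m : ℤ) + 1 else 0)
      + (if (des m : ℤ) + 1 = k then (m.length : ℤ) - 1 - (des m : ℤ) else 0) := by
  intro m
  induction m with
  | nil => simp
  | cons a t ih =>
    intro _ hc k
    have ha : a < c := hc a (by simp)
    match t, ih with
    | [], _ =>
      have h2 : des [a, c] = 0 := by
        rw [des_cons]; simp [not_lt.mpr (le_of_lt ha), des_single]
      have h1 : ([a].insertIdx (0+1) c) = [a, c] := rfl
      have hr : List.range 1 = [0] := rfl
      simp only [List.length_cons, List.length_nil, hr, List.countP_cons,
        List.countP_nil, h1, h2, des_single]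
      push_cast
      simp only [decide_eq_true_eq]
      split_ifs <;> omega
    | b :: t, ih =>
      have hb : b < c := hc b (by simp)
      have hne : (b :: t) ≠ [] := by simp
      have hc' : ∀ x ∈ b :: t, x < c := fun x hx => hc x (List.mem_cons_of_mem a hx)
      have d0 : des (a :: c :: b :: t) = 1 + des (b :: t) := by
        rw [des_cons, des_cons]
        simp [not_lt.mpr (le_of_lt ha), hb]
      have hlen : (a :: b :: t).length = (t.length + 1) + 1 := by simp
      have h0 : (a :: b :: t).insertIdx (0+1) c = a :: c :: b :: t := rfl
      rw [hlen, List.range_succ_eq_map, List.countP_cons, List.countP_map]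
      rcases le_or_gt a b with hab | hab
      · have hdm : des (a :: b :: t) = des (b :: t) := by
          rw [des_cons, if_neg (not_lt.mpr hab), zero_add]
        have d1 : ∀ j, des ((a :: b :: t).insertIdx (j+1+1) c)
            = des ((b :: t).insertIdx (j+1) c) := by
          intro j
          rw [List.insertIdx_succ_cons, List.insertIdx_succ_cons, des_cons,
            ← List.insertIdx_succ_cons, if_neg (not_lt.mpr hab), zero_add]
        have hcongr : (List.range (t.length + 1)).countP
              ((fun i => decide ((des ((a :: b :: t).insertIdx (i+1) c) : ℤ) = k)) ∘ Nat.succ)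
            = (List.range (t.length + 1)).countP
              (fun j => decide ((des ((b :: t).insertIdx (j+1) c) : ℤ) = k)) := by
          apply List.countP_congr
          intro j _
          simp only [Function.comp]
          rw [show Nat.succ j = j + 1 from rfl, d1 j]
        rw [hcongr]
        have IH := ih hne hc' k
        simp only [List.length_cons] at IH
        simp only [h0, d0, hdm]
        push_cast at IH ⊢
        rw [IH]
        simp only [decide_eq_true_eq]
        split_ifs <;> omega
      · have hdm : des (a :: b :: t) = 1 + des (b :: t) := by
          rw [des_cons, if_pos hab]
        have d1 : ∀ j, des ((a :: b :: t).insertIdx (j+1+1) c)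
            = 1 + des ((b :: t).insertIdx (j+1) c) := by
          intro j
          rw [List.insertIdx_succ_cons, List.insertIdx_succ_cons, des_cons,
            ← List.insertIdx_succ_cons, if_pos hab]
        have hcongr : (List.range (t.length + 1)).countP
              ((fun i => decide ((des ((a :: b :: t).insertIdx (i+1) c) : ℤ) = k)) ∘ Nat.succ)
            = (List.range (t.length + 1)).countP
              (fun j => decide ((des ((b :: t).insertIdx (j+1) c) : ℤ) = k - 1)) := by
          apply List.countP_congr
          intro j _
          simp only [Function.comp]
          rw [show Nat.succ j = j + 1 from rfl, d1 j]
          simp only [decide_eq_true_eq]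
          push_cast
          omega
        rw [hcongr]
        have IH := ih hne hc' (k - 1)
        simp only [List.length_cons] at IH
        simp only [h0, d0, hdm]
        push_cast at IH ⊢
        rw [IH]
        simp only [decide_eq_true_eq]
        split_ifs <;> omega


lemma keyB (c : ℤ) (σ : List ℤ) (hc0 : 0 < c) (hcσ : ∀ x ∈ σ, x < c) (k : ℤ) :
    (((List.range (σ.length + 1)).countP
        (fun i => decide ((desB (σ.insertIdx i c) : ℤ) = k))) : ℤ)
      = (if (desB σ : ℤ) = k then (desB σ : ℤ) + 1 else 0)
      + (if (desB σ : ℤ) + 1 = k then (σ.length : ℤ) - (desB σ : ℤ) else 0) := by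
  have hkey := key c (0 :: σ) (by simp) (by
    intro x hx
    rcases List.mem_cons.mp hx with rfl | hx
    · exact hc0
    · exact hcσ x hx) k
  simp only [List.length_cons] at hkey
  have hcongr : (List.range (σ.length + 1)).countP
        (fun i => decide ((desB (σ.insertIdx i c) : ℤ) = k))
      = (List.range (σ.length + 1)).countP
        (fun i => decide ((des ((0 :: σ).insertIdx (i+1) c) : ℤ) = k)) := by
    apply List.countP_congr
    intro i _
    rw [List.insertIdx_succ_cons]
    rfl
  rw [hcongr, hkey, desB]
  push_cast
  ring_nf

lemma mem_signings {w v : List ℤ} (hw : ∀ x ∈ w, 0 ≤ x) :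
    v ∈ signings w ↔ v.map (fun x => |x|) = w := by
  induction w generalizing v with
  | nil =>
    simp [signings, List.map_eq_nil_iff]
  | cons a t ih =>
    have ha : 0 ≤ a := hw a (by simp)
    have ht : ∀ x ∈ t, 0 ≤ x := fun x hx => hw x (List.mem_cons_of_mem a hx)
    simp only [signings, List.mem_flatMap]
    constructor
    · rintro ⟨u, hu, hv⟩
      have hu' := (ih ht).mp hu
      rcases List.mem_pair.mp hv with rfl | rfl
      · simp [hu', abs_of_nonneg ha]
      · simp [hu', abs_of_nonneg ha]
    · intro h
      match v, h with
      | x :: u, h =>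
        simp only [List.map_cons, List.cons.injEq] at h
        obtain ⟨hx, hu⟩ := h
        refine ⟨u, (ih ht).mpr hu, ?_⟩
        rcases (abs_eq ha).mp hx with rfl | rfl
        · simp
        · simp

lemma signings_nodup {w : List ℤ} (hw : ∀ x ∈ w, x ≠ 0) : (signings w).Nodup := by
  induction w with
  | nil => simp [signings]
  | cons a t ih =>
    have ha : a ≠ 0 := hw a (by simp)
    have ht : ∀ x ∈ t, x ≠ 0 := fun x hx => hw x (List.mem_cons_of_mem a hx)
    show ((signings t).flatMap (fun w => [a :: w, (-a) :: w])).Nodup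
    rw [List.nodup_flatMap]
    refine ⟨fun u _ => ?_, ?_⟩
    · refine List.nodup_cons.mpr ⟨?_, List.nodup_singleton _⟩
      simp only [List.mem_singleton]
      intro h
      have : a = -a := by injection h
      omega
    · refine (ih ht).imp ?_
      intro u u' huu v hv hv'
      rcases List.mem_pair.mp hv with rfl | rfl <;>
        rcases List.mem_pair.mp hv' with h | h <;>
        · injection h with h1 h2
          first
          | exact huu h2
          | omega

lemma mem_arrangements {l w : List ℤ} : w ∈ arrangements l ↔ w.Perm l := by
  simp [arrangements, List.mem_dedup, List.mem_permutations]

lemma mem_signedWords {l v : List ℤ} (hl : ∀ x ∈ l, 0 ≤ x) :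
    v ∈ signedWords l ↔ (v.map (fun x => |x|)).Perm l := by
  simp only [signedWords, List.mem_flatMap]
  constructor
  · rintro ⟨w, hw, hv⟩
    have hwperm := mem_arrangements.mp hw
    have hw0 : ∀ x ∈ w, 0 ≤ x := fun x hx => hl x (hwperm.subset hx)
    rw [(mem_signings hw0).mp hv]
    exact hwperm
  · intro h
    refine ⟨v.map (fun x => |x|), mem_arrangements.mpr h, ?_⟩
    exact (mem_signings (by
      intro x hx
      obtain ⟨y, _, rfl⟩ := List.mem_map.mp hx
      exact abs_nonneg y)).mpr rfl

lemma signedWords_nodup {l : List ℤ} (hl : ∀ x ∈ l, 0 < x) : (signedWords l).Nodup := by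
  rw [signedWords, List.nodup_flatMap]
  constructor
  · intro w hw
    exact signings_nodup (fun x hx =>
      ne_of_gt (hl x ((mem_arrangements.mp hw).subset hx)))
  · apply List.Nodup.pairwise_of_forall_ne (l.permutations.nodup_dedup)
    intro w hw w' hw' hne v hv hv'
    have hw0 : ∀ x ∈ w, 0 ≤ x := fun x hx =>
      le_of_lt (hl x ((mem_arrangements.mp hw).subset hx))
    have hw0' : ∀ x ∈ w', 0 ≤ x := fun x hx =>
      le_of_lt (hl x ((mem_arrangements.mp hw').subset hx))
    exact hne (((mem_signings hw0).mp hv).symm.trans ((mem_signings hw0').mp hv'))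

lemma insertIdx_indexOf_erase {c : ℤ} : ∀ {w : List ℤ}, c ∈ w →
    (w.erase c).insertIdx (w.idxOf c) c = w := by
  intro w
  induction w with
  | nil => intro h; cases h
  | cons a t ih =>
    intro h
    by_cases hac : a = c
    · subst hac
      simp [List.idxOf_cons_self, List.insertIdx_zero]
    · have hct : c ∈ t := by
        rcases List.mem_cons.mp h with h' | h'
        · exact absurd h'.symm hac
        · exact h'
      rw [List.erase_cons_tail (by simp [hac]), List.idxOf_cons_ne _ (hac)]
      rw [Nat.succ_eq_add_one, List.insertIdx_succ_cons, ih hct]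

lemma erase_insertIdx {c : ℤ} : ∀ (σ : List ℤ) (i : ℕ), c ∉ σ → i ≤ σ.length →
    (σ.insertIdx i c).erase c = σ := by
  intro σ
  induction σ with
  | nil =>
    intro i _ hi
    have hi0 : i = 0 := Nat.le_zero.mp (by simpa using hi)
    subst hi0
    simp
  | cons a t ih =>
    intro i hc hi
    match i with
    | 0 => simp [List.insertIdx_zero]
    | j + 1 =>
      have hac : a ≠ c := fun h => hc (h ▸ List.mem_cons_self)
      rw [List.insertIdx_succ_cons, List.erase_cons_tail (by simp [hac])]
      rw [ih j (fun h => hc (List.mem_cons_of_mem a h)) (by simpa using hi)]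

lemma indexOf_insertIdx {c : ℤ} : ∀ (σ : List ℤ) (i : ℕ), c ∉ σ → i ≤ σ.length →
    (σ.insertIdx i c).idxOf c = i := by
  intro σ
  induction σ with
  | nil =>
    intro i _ hi
    have hi0 : i = 0 := Nat.le_zero.mp (by simpa using hi)
    subst hi0
    simp
  | cons a t ih =>
    intro i hc hi
    match i with
    | 0 => simp [List.insertIdx_zero]
    | j + 1 =>
      have hac : a ≠ c := fun h => hc (h ▸ List.mem_cons_self)
      rw [List.insertIdx_succ_cons, List.idxOf_cons_ne _ hac,
        ih j (fun h => hc (List.mem_cons_of_mem a h)) (by simpa using hi)]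

lemma length_baseList (n : ℕ) : (baseList n).length = 2 * n := by
  induction n with
  | zero => rfl
  | succ m ih =>
    simp [baseList, List.length_flatMap, Nat.mul_comm]

lemma mem_baseList {n : ℕ} {x : ℤ} (h : x ∈ baseList n) : 1 ≤ x ∧ x ≤ n := by
  rw [baseList, List.mem_flatMap] at h
  obtain ⟨i, hi, hx⟩ := h
  rcases List.mem_pair.mp hx with rfl | rfl <;>
    · obtain ⟨a, ha, rfl⟩ : ∃ a < n, i = (a : ℤ) := by simpa using hi
      constructor <;> [omega; exact_mod_cast by omega]

lemma countP_flatMap' {α β : Type*} (p : β → Bool) :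
    ∀ (l : List α) (f : α → List β),
      (l.flatMap f).countP p = (l.map (fun a => (f a).countP p)).sum := by
  intro l f
  induction l with
  | nil => rfl
  | cons a t ih => simp [List.flatMap_cons, List.countP_append, ih]

lemma sum_map_ite {α : Type*} (p : α → Prop) [DecidablePred p] (c : ℤ) :
    ∀ (l : List α), (l.map (fun a => if p a then c else 0)).sum
      = c * (l.countP (fun a => decide (p a))) := by
  intro l
  induction l with
  | nil => simp
  | cons a t ih =>
    simp only [List.map_cons, List.sum_cons, List.countP_cons, ih]
    by_cases h : p a <;> simp [h] <;> push_cast <;> ring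

lemma sum_map_add {α : Type*} (f g : α → ℤ) :
    ∀ (l : List α), (l.map (fun a => f a + g a)).sum = (l.map f).sum + (l.map g).sum := by
  intro l
  induction l with
  | nil => simp
  | cons a t ih => simp [ih]; ring



lemma signed_base_facts {n : ℕ} {σ : List ℤ} (hσ : σ ∈ signedWords (baseList n)) :
    σ.length = 2 * n ∧ (∀ x ∈ σ, x < (n : ℤ) + 1) ∧ ((n : ℤ) + 1) ∉ σ := by
  have hpos : ∀ x ∈ baseList n, (0:ℤ) ≤ x := fun x hx => by
    have := (mem_baseList hx).1; omega
  have habs := (mem_signedWords hpos).mp hσ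
  have hlen : σ.length = 2 * n := by
    have h1 := habs.length_eq
    rw [List.length_map, length_baseList] at h1
    exact h1
  have hbd : ∀ x ∈ σ, x < (n : ℤ) + 1 := by
    intro x hx
    have h2 : |x| ∈ baseList n := habs.subset (List.mem_map_of_mem hx)
    have h3 := (mem_baseList h2).2
    have h4 := le_abs_self x
    omega
  refine ⟨hlen, hbd, fun h => ?_⟩
  have := hbd _ h
  omega

lemma dwords_perm (n : ℕ) :
    (Dwords n).Perm ((signedWords (baseList n)).flatMap
      (fun σ => (List.range (2*n+1)).map (fun i => σ.insertIdx i ((n:ℤ)+1)))) := by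
  have hpos : ∀ x ∈ baseList n, (0:ℤ) ≤ x := fun x hx => by
    have := (mem_baseList hx).1; omega
  have hposc : ∀ x ∈ baseList n ++ [(n:ℤ)+1], (0:ℤ) < x := by
    intro x hx
    rcases List.mem_append.mp hx with h | h
    · have := (mem_baseList h).1; omega
    · rw [List.mem_singleton] at h; subst h; positivity
  have hposc' : ∀ x ∈ baseList n ++ [(n:ℤ)+1], (0:ℤ) ≤ x := fun x hx => le_of_lt (hposc x hx)
  have nd1 : (Dwords n).Nodup := (signedWords_nodup hposc).filter _
  have nd2 : ((signedWords (baseList n)).flatMap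
      (fun σ => (List.range (2*n+1)).map (fun i => σ.insertIdx i ((n:ℤ)+1)))).Nodup := by
    rw [List.nodup_flatMap]
    constructor
    · intro σ hσ
      obtain ⟨hlen, _, hnotin⟩ := signed_base_facts hσ
      refine List.nodup_range.map_on ?_
      intro i hi i' hi' heq
      have hi2 : i ≤ σ.length := by rw [hlen]; have := List.mem_range.mp hi; omega
      have hi2' : i' ≤ σ.length := by rw [hlen]; have := List.mem_range.mp hi'; omega
      rw [← indexOf_insertIdx σ i hnotin hi2, heq, indexOf_insertIdx σ i' hnotin hi2']
    · apply List.Nodup.pairwise_of_forall_ne (signedWords_nodup (fun x hx => by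
        have := (mem_baseList hx).1; omega))
      intro σ hσ σ' hσ' hne v hv hv'
      obtain ⟨hlen, _, hnotin⟩ := signed_base_facts hσ
      obtain ⟨hlen', _, hnotin'⟩ := signed_base_facts hσ'
      obtain ⟨i, hi, rfl⟩ := List.mem_map.mp hv
      obtain ⟨i', hi', heq⟩ := List.mem_map.mp hv'
      have hi2 : i ≤ σ.length := by rw [hlen]; have := List.mem_range.mp hi; omega
      have hi2' : i' ≤ σ'.length := by rw [hlen']; have := List.mem_range.mp hi'; omega
      apply hne
      rw [← erase_insertIdx σ i hnotin hi2, ← erase_insertIdx σ' i' hnotin' hi2', heq]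
  rw [List.perm_ext_iff_of_nodup nd1 nd2]
  intro w
  rw [Dwords, List.mem_filter, mem_signedWords hposc', List.mem_flatMap]
  simp only [decide_eq_true_eq]
  constructor
  · rintro ⟨hperm, hcw⟩
    have hlenw : w.length = 2*n + 1 := by
      have h1 := hperm.length_eq
      rw [List.length_map, List.length_append, length_baseList] at h1
      simpa using h1
    have hcm : ((n:ℤ)+1) ∈ (w : Multiset ℤ) := by exact_mod_cast hcw
    obtain ⟨s, hs⟩ := Multiset.exists_cons_of_mem hcm
    have habs : Multiset.map (fun x => |x|) (w : Multiset ℤ)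
        = ((((n:ℤ)+1) :: baseList n : List ℤ) : Multiset ℤ) := by
      rw [Multiset.map_coe, Multiset.coe_eq_coe]
      exact hperm.trans (List.perm_append_singleton _ _)
    rw [hs, Multiset.map_cons, abs_of_pos (show (0:ℤ) < (n:ℤ)+1 by positivity),
      ← Multiset.cons_coe] at habs
    have habs' : Multiset.map (fun x => |x|) s = (baseList n : Multiset ℤ) :=
      (Multiset.cons_inj_right _).mp habs
    refine ⟨w.erase ((n:ℤ)+1), ?_, ?_⟩
    · apply (mem_signedWords hpos).mpr
      rw [← Multiset.coe_eq_coe, ← Multiset.map_coe, ← Multiset.coe_erase, hs,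
        Multiset.erase_cons_head, habs']
    · refine List.mem_map.mpr
        ⟨w.idxOf ((n:ℤ)+1), List.mem_range.mpr ?_, insertIdx_indexOf_erase hcw⟩
      rw [← hlenw]
      exact List.idxOf_lt_length_iff.mpr hcw
  · rintro ⟨σ, hσ, hv⟩
    obtain ⟨i, hi, rfl⟩ := List.mem_map.mp hv
    obtain ⟨hlen, hbd, hnotin⟩ := signed_base_facts hσ
    have hile : i ≤ σ.length := by rw [hlen]; have := List.mem_range.mp hi; omega
    have hp : (σ.insertIdx i ((n:ℤ)+1)).Perm (((n:ℤ)+1) :: σ) := List.perm_insertIdx _ _ hile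
    constructor
    · refine ((hp.map (fun x => |x|)).trans ?_)
      rw [List.map_cons, abs_of_pos (show (0:ℤ) < (n:ℤ)+1 by positivity)]
      exact (((mem_signedWords hpos).mp hσ).cons _).trans (List.perm_append_singleton _ _).symm
    · exact hp.mem_iff.mpr List.mem_cons_self


/-- T_{n,k} = (k+1) S_{n,k} + (2n-k+1) S_{n,k-1}, where S_{n,k} counts signed
permutations of {1,1,…,n,n} with k type-B descents and T_{n,k} counts signed
permutations of {1,1,…,n,n,n+1} (with n+1 positively signed) with k type-B descents. -/
theorem stmt10 (n : ℕ) (hn : 1 ≤ n) (k : ℤ) :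
    (TcountZ n k : ℤ) = (k + 1) * (ScountZ n k : ℤ)
      + (2 * (n : ℤ) - k + 1) * (ScountZ n (k - 1) : ℤ) := by
  have hmain : (TcountZ n k : ℤ)
      = ((signedWords (baseList n)).map (fun σ =>
          (if (desB σ : ℤ) = k then (k + 1 : ℤ) else 0)
          + (if (desB σ : ℤ) = k - 1 then (2 * (n : ℤ) - k + 1) else 0))).sum := by
    rw [TcountZ, ← List.countP_eq_length_filter, (dwords_perm n).countP_eq, countP_flatMap',
      Nat.cast_list_sum, List.map_map]
    congr 1
    apply List.map_congr_left
    intro σ hσ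
    obtain ⟨hlen, hbd, _⟩ := signed_base_facts hσ
    simp only [Function.comp_apply]
    rw [List.countP_map]
    have hrange : 2 * n + 1 = σ.length + 1 := by omega
    rw [hrange]
    have hins := keyB ((n:ℤ)+1) σ (by positivity) hbd k
    rw [show ((fun w => decide ((desB w : ℤ) = k)) ∘ fun i => σ.insertIdx i ((n:ℤ)+1))
        = (fun i => decide ((desB (σ.insertIdx i ((n:ℤ)+1)) : ℤ) = k)) from rfl]
    rw [hins, hlen]
    push_cast
    split_ifs <;> omega
  rw [hmain, sum_map_add, sum_map_ite (fun σ => (desB σ : ℤ) = k) (k+1),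
    sum_map_ite (fun σ => (desB σ : ℤ) = k - 1) (2 * (n : ℤ) - k + 1)]
  rw [ScountZ, ScountZ, ← List.countP_eq_length_filter, ← List.countP_eq_length_filter]
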